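/- Let R be a noetherian integral domain, let Σ ⊆ R be an additive subgroup, and fix r ∈ R. Let M be a finitely generated R-module such that for every nonzero s ∈ Σ and every x ∈ M, s • x = 0 implies x = 0 (M is saturated with respect to Σ \ {0}). Then the set of s ∈ Σ for which there exists a nonzero x ∈ M with (r - s) • x = 0 is finite. -/

import Mathlib

private lemma prod_smul_eq_zero_aux {R : Type*} [CommRing R] {M : Type*} [AddCommGroup M]
    [Module R M] (s : Finset ℕ) (f : ℕ → R)
    (h : ∀ i ∈ s, ∀ y : M, f i • y = 0 → y = 0) :
    ∀ x : M, (∏ i ∈ s, f i) • x = 0 → x = 0 := by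
  induction s using Finset.induction_on with
  | empty => intro x hx; simpa using hx
  | insert _ _ hni ih =>
    rename_i a t
    intro x hx
    rw [Finset.prod_insert hni, mul_smul] at hx
    exact ih (fun i hi => h i (Finset.mem_insert_of_mem hi)) x
      (h a (Finset.mem_insert_self a t) _ hx)

private lemma prod_smul_congr {R : Type*} [CommRing R] {M : Type*} [AddCommGroup M]
    [Module R M] (s : Finset ℕ) (f g : ℕ → R) (x : M)
    (h : ∀ i ∈ s, (f i - g i) • x = 0) :
    (∏ i ∈ s, f i) • x = (∏ i ∈ s, g i) • x := by
  induction s using Finset.induction_on with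
  | empty => simp
  | insert _ _ hni ih =>
    rename_i a t
    rw [Finset.prod_insert hni, Finset.prod_insert hni, mul_smul, mul_smul,
      ← ih (fun i hi => h i (Finset.mem_insert_of_mem hi)), ← sub_eq_zero, ← sub_smul,
      smul_comm, h a (Finset.mem_insert_self a t), smul_zero]

/-- Let `R` be a noetherian integral domain, `Σ` an additive subgroup of `R`, `r ∈ R`,
and `M` a finitely generated `R`-module which is saturated with respect to every nonzero
element of `Σ`.  Then the set of `s ∈ Σ` such that `M` is not saturated with respect to
`r - s` (i.e. such that some nonzero `x ∈ M` satisfies `(r - s) • x = 0`) is finite. -/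
theorem stmt0 (R : Type*) [CommRing R] [IsDomain R] [IsNoetherianRing R]
    (Sg : AddSubgroup R) (r : R)
    (M : Type*) [AddCommGroup M] [Module R M] [Module.Finite R M]
    (hsat : ∀ s ∈ Sg, s ≠ 0 → ∀ x : M, s • x = 0 → x = 0) :
    {s : R | s ∈ Sg ∧ ∃ x : M, x ≠ 0 ∧ (r - s) • x = 0}.Finite := by
  by_contra hinf
  set T := {s : R | s ∈ Sg ∧ ∃ x : M, x ≠ 0 ∧ (r - s) • x = 0} with hT
  obtain e := Set.Infinite.natEmbedding _ hinf
  -- the chain of torsion submodules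
  set c : ℕ → R := fun n => ∏ i ∈ Finset.range n, (r - (e i : R)) with hc
  set K : ℕ → Submodule R M := fun n => Submodule.torsionBy R M (c n) with hK
  have hmono : Monotone K := by
    apply monotone_nat_of_le_succ
    intro n x hx
    rw [hK, Submodule.mem_torsionBy_iff] at hx ⊢
    simp only [hc, Finset.prod_range_succ] at hx ⊢
    rw [mul_comm, mul_smul, hx, smul_zero]
  have hstrict : ∀ n, K n < K (n + 1) := by
    intro n
    obtain ⟨hmem, x, hx0, hxe⟩ := (e n).2
    refine lt_of_le_of_ne (hmono (Nat.le_succ n)) ?_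
    intro heq
    have hxK : x ∈ K (n + 1) := by
      rw [hK, Submodule.mem_torsionBy_iff]
      simp only [hc, Finset.prod_range_succ]
      rw [mul_smul, hxe, smul_zero]
    rw [← heq, hK, Submodule.mem_torsionBy_iff] at hxK
    -- c n • x = (∏ i < n, (e n - e i)) • x
    have hcongr : (c n) • x = (∏ i ∈ Finset.range n, ((e n : R) - (e i : R))) • x := by
      rw [hc]
      apply prod_smul_congr
      intro i _
      have : (r - (e i : R)) - ((e n : R) - (e i : R)) = r - (e n : R) := by ring
      rw [this, hxe]
    rw [hcongr] at hxK
    refine hx0 (prod_smul_eq_zero_aux _ _ ?_ x hxK)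
    intro i hi y hy
    have hmem' : (e n : R) - (e i : R) ∈ Sg := Sg.sub_mem (e n).2.1 (e i).2.1
    have hne : (e n : R) - (e i : R) ≠ 0 := by
      intro h0
      have h1 : (e n : R) = (e i : R) := sub_eq_zero.mp h0
      have h2 := e.injective (Subtype.ext h1)
      have h3 := Finset.mem_range.mp hi
      omega
    exact hsat _ hmem' hne y hy
  obtain ⟨n, hn⟩ := monotone_stabilizes_iff_noetherian.mpr inferInstance ⟨K, hmono⟩
  exact (hstrict n).ne (hn (n + 1) (Nat.le_succ n))
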